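/- Every graph with no isolated vertices has a minimum dominating set that is open irredundant. -/

import Mathlib

open SimpleGraph

variable {V : Type*}

/-- Closed neighborhood of a vertex. -/
def closedNbhd (G : SimpleGraph V) (v : V) : Set V := insert v (G.neighborSet v)

/-- Closed neighborhood of a set of vertices. -/
def closedNbhdSet (G : SimpleGraph V) (A : Set V) : Set V := ⋃ a ∈ A, closedNbhd G a

/-- `D` is a dominating set of `G`. -/
def IsDomSet (G : SimpleGraph V) (D : Set V) : Prop :=
  ∀ v, ∃ u ∈ D, v ∈ closedNbhd G u

/-- `D` is a minimal dominating set of `G`. -/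
def IsMinimalDomSet (G : SimpleGraph V) (D : Set V) : Prop :=
  IsDomSet G D ∧ ∀ D' ⊆ D, IsDomSet G D' → D' = D

/-- The domination number `γ`. -/
noncomputable def domNum (G : SimpleGraph V) : ℕ :=
  sInf {n | ∃ D : Set V, IsDomSet G D ∧ D.ncard = n}

/-- The upper domination number `Γ`. -/
noncomputable def upperDomNum (G : SimpleGraph V) : ℕ :=
  sSup {n | ∃ D : Set V, IsMinimalDomSet G D ∧ D.ncard = n}

/-- A graph is well-dominated if `γ = Γ`. -/
def WellDominated (G : SimpleGraph V) : Prop := domNum G = upperDomNum G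

/-- `A` is an independent set of `G`. -/
def IsIndep (G : SimpleGraph V) (A : Set V) : Prop :=
  ∀ u ∈ A, ∀ v ∈ A, ¬ G.Adj u v

/-- `A` is a maximal independent set of `G`. -/
def IsMaxIndep (G : SimpleGraph V) (A : Set V) : Prop :=
  IsIndep G A ∧ ∀ B, IsIndep G B → A ⊆ B → B = A

/-- The independence number `α`. -/
noncomputable def indepNum (G : SimpleGraph V) : ℕ :=
  sSup {n | ∃ A : Set V, IsIndep G A ∧ A.ncard = n}

/-- The strong product of two graphs. -/
def strongProd {α β : Type*} (G : SimpleGraph α) (H : SimpleGraph β) :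
    SimpleGraph (α × β) where
  Adj x y := x ≠ y ∧ (x.1 = y.1 ∨ G.Adj x.1 y.1) ∧ (x.2 = y.2 ∨ H.Adj x.2 y.2)
  symm := by
    constructor
    rintro x y ⟨h1, h2, h3⟩
    refine ⟨h1.symm, ?_, ?_⟩
    · cases h2 with
      | inl h => exact Or.inl h.symm
      | inr h => exact Or.inr h.symm
    · cases h3 with
      | inl h => exact Or.inl h.symm
      | inr h => exact Or.inr h.symm
  loopless := by constructor; rintro x ⟨h1, _⟩; exact h1 rfl

/-- The direct (tensor) product of two graphs. -/
def tensorProd {α β : Type*} (G : SimpleGraph α) (H : SimpleGraph β) :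
    SimpleGraph (α × β) where
  Adj x y := G.Adj x.1 y.1 ∧ H.Adj x.2 y.2
  symm := ⟨fun _ _ h => ⟨h.1.symm, h.2.symm⟩⟩
  loopless := ⟨fun _ h => h.1.ne rfl⟩

/-- The corona `G ⊙ K₁`. -/
def corona {α : Type*} (G : SimpleGraph α) : SimpleGraph (α ⊕ α) :=
  SimpleGraph.fromRel (fun x y =>
    match x, y with
    | Sum.inl u, Sum.inl v => G.Adj u v
    | Sum.inl u, Sum.inr v => u = v
    | _, _ => False)

/-- The private neighborhood `pn[u,D] = N[u] - N[D - {u}]`. -/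
def privateNbhd (G : SimpleGraph V) (D : Set V) (u : V) : Set V :=
  {x | x ∈ closedNbhd G u ∧ ∀ d ∈ D, d ≠ u → x ∉ closedNbhd G d}

/-- A set `D` is open irredundant if every vertex of `D` has an external
private neighbor. -/
def IsOpenIrred (G : SimpleGraph V) (D : Set V) : Prop :=
  ∀ u ∈ D, ∃ x ∈ G.neighborSet u, ∀ d ∈ D, d ≠ u → x ∉ closedNbhd G d

/-- Every finite graph with no isolated vertices has an open irredundant
minimum dominating set. -/
theorem stmt_12 {V : Type*} [Fintype V] (G : SimpleGraph V)
    (h : ∀ v : V, ∃ u, G.Adj v u) :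
    ∃ D : Set V, IsDomSet G D ∧ D.ncard = domNum G ∧ IsOpenIrred G D := by
  classical
  have hdomle : ∀ (E : Set V), IsDomSet G E → domNum G ≤ E.ncard := by
    intro E hE
    exact Nat.sInf_le ⟨E, hE, rfl⟩
  have hγ : ∃ D : Set V, IsDomSet G D ∧ D.ncard = domNum G := by
    have huniv : IsDomSet G (Set.univ : Set V) :=
      fun v => ⟨v, Set.mem_univ v, Set.mem_insert v _⟩
    have hmem : domNum G ∈ {n | ∃ D : Set V, IsDomSet G D ∧ D.ncard = n} :=
      Nat.sInf_mem ⟨(Set.univ : Set V).ncard, Set.univ, huniv, rfl⟩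
    exact hmem
  set iso : Set V → Set V := fun E => {w | w ∈ E ∧ ∀ d ∈ E, ¬ G.Adj w d} with hisodef
  set T : Set ℕ :=
    {n | ∃ D : Set V, (IsDomSet G D ∧ D.ncard = domNum G) ∧ (iso D).ncard = n} with hTdef
  have hTne : T.Nonempty := by
    obtain ⟨D, hD⟩ := hγ
    exact ⟨(iso D).ncard, D, hD, rfl⟩
  obtain ⟨D, ⟨hdom, hcard⟩, hq⟩ := Nat.sInf_mem hTne
  refine ⟨D, hdom, hcard, ?_⟩
  intro u hu
  by_contra hbad
  push_neg at hbad
  -- hbad : ∀ x ∈ G.neighborSet u, ∃ d ∈ D, d ≠ u ∧ x ∈ closedNbhd G d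
  have hDfin : D.Finite := Set.toFinite D
  have hDpos : 1 ≤ D.ncard := (Set.ncard_pos (Set.toFinite D)).2 ⟨u, hu⟩
  -- Step 1: u has no neighbor in D
  have hnoD : ∀ w ∈ D, ¬ G.Adj u w := by
    intro w hw hadj
    have hwu : w ≠ u := fun e => G.loopless.irrefl u (e ▸ hadj)
    have hdom' : IsDomSet G (D \ {u}) := by
      intro x
      obtain ⟨d, hd, hxd⟩ := hdom x
      by_cases hdu : d = u
      · subst hdu
        simp only [closedNbhd, Set.mem_insert_iff, SimpleGraph.mem_neighborSet] at hxd
        rcases hxd with rfl | hx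
        · exact ⟨w, ⟨hw, hwu⟩, Or.inr (by exact hadj.symm)⟩
        · obtain ⟨d', hd', hne', hxd'⟩ := hbad x hx
          exact ⟨d', ⟨hd', hne'⟩, hxd'⟩
      · exact ⟨d, ⟨hd, hdu⟩, hxd⟩
    have hle := hdomle _ hdom'
    have hcd : (D \ {u}).ncard = D.ncard - 1 :=
      Set.ncard_diff_singleton_of_mem hu
    omega
  -- Step 2: pick an external neighbor v of u
  obtain ⟨v, hv⟩ := h u
  have hvD : v ∉ D := fun hvD => hnoD v hvD hv
  obtain ⟨d₀, hd₀, hd₀u, hvd₀⟩ := hbad v (SimpleGraph.mem_neighborSet G u v |>.mpr hv)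
  have hvd₀adj : G.Adj d₀ v := by
    simp only [closedNbhd, Set.mem_insert_iff, SimpleGraph.mem_neighborSet] at hvd₀
    rcases hvd₀ with rfl | hx
    · exact absurd hd₀ hvD
    · exact hx
  -- The swapped set
  set D' : Set V := insert v (D \ {u}) with hD'def
  have hvnot : v ∉ D \ {u} := fun hc => hvD hc.1
  have hdom' : IsDomSet G D' := by
    intro x
    obtain ⟨d, hd, hxd⟩ := hdom x
    by_cases hdu : d = u
    · subst hdu
      simp only [closedNbhd, Set.mem_insert_iff, SimpleGraph.mem_neighborSet] at hxd
      rcases hxd with rfl | hx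
      · exact ⟨v, Set.mem_insert v _, Or.inr hv.symm⟩
      · obtain ⟨d', hd', hne', hxd'⟩ := hbad x hx
        exact ⟨d', Set.mem_insert_of_mem _ ⟨hd', hne'⟩, hxd'⟩
    · exact ⟨d, Set.mem_insert_of_mem _ ⟨hd, hdu⟩, hxd⟩
  have hcard' : D'.ncard = domNum G := by
    have h1 : D'.ncard = (D \ {u}).ncard + 1 :=
      Set.ncard_insert_of_notMem hvnot hDfin.diff
    have h2 : (D \ {u}).ncard = D.ncard - 1 :=
      Set.ncard_diff_singleton_of_mem hu
    omega
  -- iso D' ⊆ iso D \ {u}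
  have hsub : iso D' ⊆ iso D \ {u} := by
    rintro w ⟨hwD', hwiso⟩
    have hwv : w ≠ v := by
      rintro rfl
      exact hwiso d₀ (Set.mem_insert_of_mem _ ⟨hd₀, hd₀u⟩) hvd₀adj.symm
    have hwD : w ∈ D \ {u} := by
      rcases hwD' with rfl | hw
      · exact absurd rfl hwv
      · exact hw
    refine ⟨⟨hwD.1, ?_⟩, hwD.2⟩
    intro d hd hadj
    by_cases hdu : d = u
    · subst hdu
      exact hnoD w hwD.1 hadj.symm
    · exact hwiso d (Set.mem_insert_of_mem _ ⟨hd, hdu⟩) hadj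
  have huiso : u ∈ iso D := ⟨hu, fun d hd hadj => hnoD d hd hadj⟩
  have hisoD'le : (iso D').ncard ≤ (iso D).ncard - 1 := by
    have := Set.ncard_le_ncard hsub (Set.toFinite _)
    have h2 : (iso D \ {u}).ncard = (iso D).ncard - 1 :=
      Set.ncard_diff_singleton_of_mem huiso
    omega
  have hisopos : 1 ≤ (iso D).ncard := (Set.ncard_pos (Set.toFinite _)).2 ⟨u, huiso⟩
  have hle' : sInf T ≤ (iso D').ncard := Nat.sInf_le ⟨D', ⟨hdom', hcard'⟩, rfl⟩
  omega
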